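/- Let a > 0 and let g : ℝ → ℂ be a Schwartz function. Define (F₁g)(x) = √(a/π) ∫_ℝ g(t)·e^{i a x t} dt. Then for every z ∈ ℂ, [B_{a/2}(F₁g)](z) = √2 · (B_{a/2}g)(i z). -/

import Mathlib

open Complex Real SchwartzMap MeasureTheory

/-- The (parametrized) Bargmann transform `B_{a/2}`:
`(B_{a/2}f)(z) = (a/π)^{1/4} ∫_ℝ f(x) e^{axz − (a/2)x² − (a/4)z²} dx`. -/
noncomputable def bargmann (a : ℝ) (f : ℝ → ℂ) (z : ℂ) : ℂ :=
  ((a / Real.pi) ^ ((1 : ℝ) / 4) : ℝ) *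
    ∫ x : ℝ, f x * Complex.exp (a * x * z - (a / 2) * x ^ 2 - (a / 4) * z ^ 2)

/-- The generalized Fourier transform `(F₁ g)(x) = √(a/π) ∫ g(t) e^{iaxt} dt`. -/
noncomputable def fourierOne (a : ℝ) (g : ℝ → ℂ) (x : ℝ) : ℂ :=
  (Real.sqrt (a / Real.pi) : ℂ) * ∫ t : ℝ, g t * Complex.exp (Complex.I * a * x * t)

/-- For a Schwartz function `g`, the Bargmann transform of its Fourier transform is
`[B_{a/2}(F₁ g)](z) = √2 · (B_{a/2} g)(iz)`. -/
theorem bargmann_fourier (a : ℝ) (ha : 0 < a) (g : SchwartzMap ℝ ℂ) (z : ℂ) :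
    bargmann a (fourierOne a (fun x : ℝ => g x)) z =
      (Real.sqrt 2 : ℂ) * bargmann a (fun x : ℝ => g x) (Complex.I * z) := by
  have hπ : (0:ℝ) < Real.pi := Real.pi_pos
  have hb : (((-(a/2) : ℝ) : ℂ)).re < 0 := by
    simp only [Complex.ofReal_re]; linarith
  -- the quadratic exponent appearing in the Bargmann transform, rewritten
  have hE : ∀ x : ℝ, (a : ℂ) * x * z - (a/2 : ℂ) * (x:ℂ)^2 - (a/4 : ℂ) * z^2
      = ((-(a/2) : ℝ) : ℂ) * (x:ℂ)^2 + (a * z) * x + (-(a/4 : ℂ) * z^2) := by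
    intro x; push_cast; ring
  -- integrability of the Gaussian factor
  have hEint : Integrable (fun x : ℝ =>
      Complex.exp ((a : ℂ) * x * z - (a/2 : ℂ) * (x:ℂ)^2 - (a/4 : ℂ) * z^2)) := by
    simp_rw [hE]
    exact integrable_cexp_quadratic' hb _ _
  -- Fubini integrability for the double integral
  have hint : Integrable (Function.uncurry fun x t : ℝ =>
      (g t : ℂ) * Complex.exp (Complex.I * a * x * t +
        ((a : ℂ) * x * z - (a/2 : ℂ) * (x:ℂ)^2 - (a/4 : ℂ) * z^2)))
      (MeasureTheory.volume.prod MeasureTheory.volume) := by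
    apply (hEint.norm.mul_prod g.integrable.norm).mono'
    · apply Continuous.aestronglyMeasurable
      apply Continuous.mul (g.continuous.comp continuous_snd)
      apply Complex.continuous_exp.comp
      fun_prop
    · filter_upwards with p
      rcases p with ⟨x, t⟩
      simp only [Function.uncurry, norm_mul]
      have h0 : (Complex.I * (a:ℂ) * (x:ℂ) * (t:ℂ)).re = 0 := by simp
      simp only [Complex.norm_exp]
      rw [add_re, h0, zero_add, mul_comm]
  -- value of the inner Gaussian integral
  have key : ∀ t : ℝ,
      (∫ x : ℝ, Complex.exp (Complex.I * a * x * t +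
        ((a : ℂ) * x * z - (a/2 : ℂ) * (x:ℂ)^2 - (a/4 : ℂ) * z^2)))
      = (Real.sqrt (2 * Real.pi / a) : ℂ) *
        Complex.exp ((a : ℂ) * t * (Complex.I * z) - (a/2 : ℂ) * (t:ℂ)^2
          - (a/4 : ℂ) * (Complex.I * z)^2) := by
    intro t
    have h1 : ∀ x : ℝ, Complex.I * a * x * t +
        ((a : ℂ) * x * z - (a/2 : ℂ) * (x:ℂ)^2 - (a/4 : ℂ) * z^2)
        = ((-(a/2) : ℝ) : ℂ) * (x:ℂ)^2 + ((a:ℂ) * z + Complex.I * a * t) * x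
          + (-(a/4 : ℂ) * z^2) := by
      intro x; push_cast; ring
    simp_rw [h1]
    rw [integral_cexp_quadratic hb _ _]
    congr 1
    · rw [show ((Real.pi : ℂ) / -((-(a/2) : ℝ) : ℂ)) = ((2 * Real.pi / a : ℝ) : ℂ) by
        push_cast; field_simp]
      rw [Real.sqrt_eq_rpow, Complex.ofReal_cpow (by positivity)]
      norm_num
    · congr 1
      have hI : (Complex.I)^2 = -1 := Complex.I_sq
      have ha' : (a : ℂ) ≠ 0 := Complex.ofReal_ne_zero.mpr ha.ne'
      push_cast
      field_simp
      ring_nf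
      simp only [hI]
      ring
  -- constant bookkeeping
  have hc : (Real.sqrt (a / Real.pi) : ℂ) * (Real.sqrt (2 * Real.pi / a) : ℂ)
      = (Real.sqrt 2 : ℂ) := by
    rw [← Complex.ofReal_mul, ← Real.sqrt_mul (by positivity)]
    norm_num
    congr 1
    field_simp
  unfold bargmann fourierOne
  have step1 : ∀ x : ℝ,
      ((Real.sqrt (a / Real.pi) : ℂ) *
          ∫ t : ℝ, (g t : ℂ) * Complex.exp (Complex.I * a * x * t)) *
        Complex.exp ((a : ℂ) * x * z - (a/2 : ℂ) * (x:ℂ)^2 - (a/4 : ℂ) * z^2)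
      = (Real.sqrt (a / Real.pi) : ℂ) *
        ∫ t : ℝ, (g t : ℂ) * Complex.exp (Complex.I * a * x * t +
          ((a : ℂ) * x * z - (a/2 : ℂ) * (x:ℂ)^2 - (a/4 : ℂ) * z^2)) := by
    intro x
    rw [mul_assoc, ← MeasureTheory.integral_mul_const]
    congr 1
    exact MeasureTheory.integral_congr_ae (Filter.Eventually.of_forall fun t => by
      simp only [mul_assoc, ← Complex.exp_add])
  simp_rw [step1, MeasureTheory.integral_const_mul]
  rw [MeasureTheory.integral_integral_swap hint]
  simp_rw [MeasureTheory.integral_const_mul, key]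
  have step2 : ∀ t : ℝ, (g t : ℂ) * ((Real.sqrt (2 * Real.pi / a) : ℂ) *
      Complex.exp ((a : ℂ) * t * (Complex.I * z) - (a/2 : ℂ) * (t:ℂ)^2
        - (a/4 : ℂ) * (Complex.I * z)^2))
      = (Real.sqrt (2 * Real.pi / a) : ℂ) * ((g t : ℂ) *
      Complex.exp ((a : ℂ) * t * (Complex.I * z) - (a/2 : ℂ) * (t:ℂ)^2
        - (a/4 : ℂ) * (Complex.I * z)^2)) := fun t => mul_left_comm _ _ _
  simp_rw [step2, MeasureTheory.integral_const_mul]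
  set S : ℂ := ∫ t : ℝ, (g t : ℂ) *
      Complex.exp ((a : ℂ) * t * (Complex.I * z) - (a/2 : ℂ) * (t:ℂ)^2
        - (a/4 : ℂ) * (Complex.I * z)^2) with hS
  linear_combination (((a / Real.pi) ^ ((1:ℝ)/4) : ℝ) : ℂ) * S * hc
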